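/- arXiv:2511.08160 — 7 statements merged into one kernel-verified Lean document; each statement's English description precedes it below -/
import Mathlib

section
/- Let (N, M, (v_i)_{i∈N}, (s_i)_{i∈N}) be a fair-division-with-social-impact instance with N nonempty, and define binary social impacts s*_i : M → {0,1} by s*_i(g) = 1 if s_i(g) = max_{j∈N} s_j(g) and s*_i(g) = 0 otherwise. Then an allocation A is SIM with respect to (s_i) and EF1 if and only if A is SIM with respect to (s*_i) and EF1; in particular, the instance (N, M, (v_i), (s_i)) admits a SIM and EF1 allocation if and only if the instance (N, M, (v_i), (s*_i)) does. -/
open Finset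

variable {N M : Type*}

/-- The bundle of agent `i` under allocation `A` (items mapped to `i`). -/
def bundle [Fintype M] [DecidableEq N] (A : M → N) (i : N) : Finset M :=
  Finset.univ.filter fun g => A g = i

/-- The (additive) value of a bundle `S` under the item-values `f`. -/
def val (f : M → ℕ) (S : Finset M) : ℕ := ∑ g ∈ S, f g

/-- An allocation is social impact maximizing (SIM). -/
def SIM [Fintype N] [Fintype M] [DecidableEq N] (s : N → M → ℕ) (A : M → N) : Prop :=
  ∀ A' : M → N, ∑ i : N, val (s i) (bundle A i) ≥ ∑ i : N, val (s i) (bundle A' i)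

/-- An allocation is envy-free up to one item (EF1). -/
def EF1 [Fintype M] [DecidableEq N] [DecidableEq M] (v : N → M → ℕ) (A : M → N) : Prop :=
  ∀ i j : N, ∃ g : M, val (v i) (bundle A i) ≥ val (v i) ((bundle A j).erase g)

lemma sum_val_eq [Fintype N] [Fintype M] [DecidableEq N] (f : N → M → ℕ) (A : M → N) :
    ∑ i : N, val (f i) (bundle A i) = ∑ g : M, f (A g) g := by
  unfold _root_.val bundle
  rw [← Finset.sum_fiberwise Finset.univ A (fun g => f (A g) g)]
  refine Finset.sum_congr rfl fun i _ => Finset.sum_congr rfl fun g hg => ?_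
  simp only [Finset.mem_filter] at hg
  rw [hg.2]

lemma sim_iff [Fintype N] [Fintype M] [DecidableEq N] [Nonempty N]
    (s : N → M → ℕ) (A : M → N) :
    SIM s A ↔ ∀ g : M, s (A g) g = Finset.univ.sup (fun j : N => s j g) := by
  constructor
  · intro h
    by_contra hc
    push_neg at hc
    obtain ⟨g0, hg0⟩ := hc
    have hlt : s (A g0) g0 < Finset.univ.sup (fun j : N => s j g0) :=
      lt_of_le_of_ne (Finset.le_sup (f := fun j : N => s j g0) (Finset.mem_univ (A g0))) hg0
    have hex : ∀ g : M, ∃ j : N, Finset.univ.sup (fun j : N => s j g) = s j g := by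
      intro g
      obtain ⟨j, _, hj⟩ := Finset.exists_mem_eq_sup Finset.univ Finset.univ_nonempty
        (fun j : N => s j g)
      exact ⟨j, hj⟩
    set A' : M → N := fun g => Classical.choose (hex g) with hA'
    have hA'val : ∀ g : M, s (A' g) g = Finset.univ.sup (fun j : N => s j g) := fun g =>
      (Classical.choose_spec (hex g)).symm
    have hsum : ∑ g : M, s (A g) g < ∑ g : M, s (A' g) g := by
      refine Finset.sum_lt_sum (fun g _ => ?_) ⟨g0, Finset.mem_univ _, ?_⟩
      · rw [hA'val g]; exact Finset.le_sup (f := fun j : N => s j g) (Finset.mem_univ (A g))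
      · rw [hA'val g0]; exact hlt
    have := h A'
    rw [sum_val_eq, sum_val_eq] at this
    omega
  · intro h A'
    rw [ge_iff_le, sum_val_eq, sum_val_eq]
    refine Finset.sum_le_sum fun g _ => ?_
    rw [h g]
    exact Finset.le_sup (f := fun j : N => s j g) (Finset.mem_univ (A' g))

/-- Replacing the social impacts by the binary impacts `s*` (indicator of being a
social-impact maximizer of the item) preserves being SIM-and-EF1, and in particular
preserves the existence of a SIM and EF1 allocation. -/
theorem sim_ef1_binary_social_impact
    [Fintype N] [Fintype M] [DecidableEq N] [DecidableEq M] [Nonempty N]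
    (v s : N → M → ℕ) (sstar : N → M → ℕ)
    (hstar : ∀ i g, sstar i g =
      if s i g = Finset.univ.sup (fun j : N => s j g) then 1 else 0) :
    (∀ A : M → N, (SIM s A ∧ EF1 v A) ↔ (SIM sstar A ∧ EF1 v A)) ∧
    ((∃ A : M → N, SIM s A ∧ EF1 v A) ↔ (∃ A : M → N, SIM sstar A ∧ EF1 v A)) := by
  have hsupstar : ∀ g : M, Finset.univ.sup (fun j : N => sstar j g) = 1 := by
    intro g
    obtain ⟨j, _, hj⟩ := Finset.exists_mem_eq_sup Finset.univ Finset.univ_nonempty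
      (fun j : N => s j g)
    apply le_antisymm
    · exact Finset.sup_le fun i _ => by rw [hstar]; split <;> omega
    · have : sstar j g = 1 := by rw [hstar]; simp [hj.symm]
      calc 1 = sstar j g := this.symm
        _ ≤ _ := Finset.le_sup (f := fun j : N => sstar j g) (Finset.mem_univ j)
  have key : ∀ A : M → N, SIM s A ↔ SIM sstar A := by
    intro A
    rw [sim_iff, sim_iff]
    refine forall_congr' fun g => ?_
    rw [hsupstar g, hstar]
    constructor
    · intro h; simp [h]
    · intro h; by_contra hc; simp [hc] at h
  refine ⟨fun A => by rw [key A], ?_⟩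
  constructor
  · rintro ⟨A, hA1, hA2⟩; exact ⟨A, (key A).mp hA1, hA2⟩
  · rintro ⟨A, hA1, hA2⟩; exact ⟨A, (key A).mpr hA1, hA2⟩
end

section
/- Let N be a finite set of agents and M a finite set of items with binary additive valuations v_i : M → {0,1}. Construct the fair-division-with-social-impact instance J with agent set N, item set M ∪ {g_i : i ∈ N} (one new special item g_i per agent i), valuations v'_i extending v_i and satisfying v'_i(g_i) = 0 and v'_i(g_j) = 1 for every j ≠ i, and social impacts given by s_i(g) = 1 for every g ∈ M, s_i(g_i) = 1, and s_i(g_j) = 0 for every j ≠ i. Then J admits an allocation that is simultaneously SIM and EF1 if and only if M admits an envy-free allocation with respect to the valuations (v_i). -/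
open Finset

variable {N M : Type*}

/-- An allocation is envy-free (EF). -/
def EF [Fintype M] [DecidableEq N] (v : N → M → ℕ) (A : M → N) : Prop :=
  ∀ i j : N, val (v i) (bundle A i) ≥ val (v i) (bundle A j)

lemma welfare_eq {I : Type*} [Fintype I] [Fintype N] [DecidableEq N]
    (s : N → I → ℕ) (A : I → N) :
    ∑ i : N, _root_.val (s i) (bundle A i) = ∑ g : I, s (A g) g := by
  unfold _root_.val bundle
  rw [← Finset.sum_fiberwise Finset.univ A (fun g => s (A g) g)]
  refine Finset.sum_congr rfl fun i _ => Finset.sum_congr rfl fun g hg => ?_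
  rw [(Finset.mem_filter.mp hg).2]

lemma bundle_val_sum [Fintype N] [Fintype M] [DecidableEq N]
    (f : M ⊕ N → ℕ) (A : M ⊕ N → N) (i : N) :
    _root_.val f (bundle A i) =
      (∑ g : M, if A (Sum.inl g) = i then f (Sum.inl g) else 0) +
      (∑ j : N, if A (Sum.inr j) = i then f (Sum.inr j) else 0) := by
  unfold _root_.val bundle
  rw [Finset.sum_filter, Fintype.sum_sum_type]

lemma val_filter [Fintype M] [DecidableEq N] (f : M → ℕ) (B : M → N) (i : N) :
    _root_.val f (bundle B i) = ∑ g : M, if B g = i then f g else 0 := by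
  unfold _root_.val bundle; rw [Finset.sum_filter]

lemma val_le_erase_add {M : Type*} [DecidableEq M] (f : M → ℕ) (S : Finset M) (a : M) :
    _root_.val f S ≤ _root_.val f (S.erase a) + f a := by
  by_cases h : a ∈ S
  · exact le_of_eq (Finset.sum_erase_add S f h).symm
  · rw [Finset.erase_eq_of_notMem h]; exact Nat.le_add_right _ _

/-- The reduction instance `J`: items `M ⊕ N` (standard items `Sum.inl g` plus one
special item `Sum.inr i` per agent `i`), extended valuations
(`v'_i(g_i) = 0`, `v'_i(g_j) = 1` for `j ≠ i`) and social impacts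
(`s_i(g) = 1` for all `g ∈ M`, `s_i(g_i) = 1`, `s_i(g_j) = 0` for `j ≠ i`).
It admits a SIM and EF1 allocation iff `M` admits an EF allocation w.r.t. `v`. -/
theorem sim_ef1_iff_ef
    [Fintype N] [Fintype M] [DecidableEq N] [DecidableEq M]
    (v : N → M → ℕ) (hv : ∀ i g, v i g ≤ 1) :
    (∃ A : M ⊕ N → N,
        SIM (fun i => Sum.elim (fun _ : M => 1) (fun j : N => if j = i then 1 else 0)) A ∧
        EF1 (fun i => Sum.elim (v i) (fun j : N => if j = i then 0 else 1)) A) ↔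
    (∃ B : M → N, EF v B) := by
  constructor
  · rintro ⟨A, hSIM, hEF1⟩
    have hA : ∀ j, A (Sum.inr j) = j := by
      by_contra h
      push_neg at h
      obtain ⟨j0, hj0⟩ := h
      have h1 := hSIM (Sum.elim (fun g => A (Sum.inl g)) id)
      rw [welfare_eq, welfare_eq] at h1
      simp only [Fintype.sum_sum_type, Sum.elim_inl, Sum.elim_inr, id] at h1
      have hlt : (∑ j : N, if j = A (Sum.inr j) then 1 else 0) < ∑ _j : N, 1 :=
        Finset.sum_lt_sum (fun k _ => by split <;> omega)
          ⟨j0, Finset.mem_univ _, by rw [if_neg fun h => hj0 h.symm]; omega⟩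
      simp only [if_true] at h1
      omega
    refine ⟨fun g => A (Sum.inl g), fun i j => ?_⟩
    by_cases hij : i = j
    · subst hij; exact le_refl _
    obtain ⟨g0, hg0⟩ := hEF1 i j
    beta_reduce at hg0
    have hL : val (Sum.elim (v i) (fun k : N => if k = i then 0 else 1)) (bundle A i)
        = val (v i) (bundle (fun g => A (Sum.inl g)) i) := by
      rw [bundle_val_sum, val_filter]
      simp [hA]
    have hR : val (Sum.elim (v i) (fun k : N => if k = i then 0 else 1)) (bundle A j)
        = val (v i) (bundle (fun g => A (Sum.inl g)) j) + 1 := by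
      rw [bundle_val_sum, val_filter]
      have : ∀ k : N, (if A (Sum.inr k) = j then
          (Sum.elim (v i) (fun k : N => if k = i then 0 else 1) (Sum.inr k)) else 0)
          = if k = j then 1 else 0 := by
        intro k
        simp only [hA, Sum.elim_inr]
        split_ifs with h1 h2
        · exact absurd (h2.symm.trans h1) hij
        · rfl
        · rfl
      rw [Finset.sum_congr rfl (fun k _ => this k)]
      simp
    have hbound : val (Sum.elim (v i) (fun k : N => if k = i then 0 else 1)) (bundle A j)
        ≤ val (Sum.elim (v i) (fun k : N => if k = i then 0 else 1)) ((bundle A j).erase g0)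
          + 1 := by
      refine le_trans (val_le_erase_add _ _ g0) (Nat.add_le_add_left ?_ _)
      rcases g0 with m | k
      · exact hv i m
      · simp only [Sum.elim_inr]; split <;> omega
    rw [hL] at hg0
    omega
  · rintro ⟨B, hEF⟩
    refine ⟨Sum.elim B id, fun A' => ?_, fun i j => ?_⟩
    · rw [welfare_eq, welfare_eq]
      refine Finset.sum_le_sum fun g _ => ?_
      rcases g with m | k
      · simp
      · simp only [Sum.elim_inr, id_eq]
        split <;> simp
    · refine ⟨Sum.inr j, ?_⟩
      have hL : val (Sum.elim (v i) (fun k : N => if k = i then 0 else 1))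
          (bundle (Sum.elim B id) i) = val (v i) (bundle B i) := by
        rw [bundle_val_sum, val_filter]
        simp
        convert add_zero _ using 2
        exact Finset.sum_eq_zero fun k _ => by split_ifs <;> rfl
        rfl
      have hmem : Sum.inr j ∈ bundle (Sum.elim B id) j := by
        simp [bundle]
      have hR : val (Sum.elim (v i) (fun k : N => if k = i then 0 else 1))
          ((bundle (Sum.elim B id) j).erase (Sum.inr j))
          = val (v i) (bundle B j) := by
        have h1 := Finset.sum_erase_add (bundle (Sum.elim B id) j)
          (Sum.elim (v i) (fun k : N => if k = i then 0 else 1)) hmem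
        have h2 : val (Sum.elim (v i) (fun k : N => if k = i then 0 else 1))
            (bundle (Sum.elim B id) j)
            = val (v i) (bundle B j) + (if j = i then 0 else 1) := by
          rw [bundle_val_sum, val_filter]
          have : ∀ k : N, (if (Sum.elim B id (Sum.inr k) : N) = j then
              (Sum.elim (v i) (fun k : N => if k = i then 0 else 1) (Sum.inr k)) else 0)
              = if k = j then (if j = i then 0 else 1) else 0 := by
            intro k
            by_cases hk : k = j <;> simp [hk]
          rw [Finset.sum_congr rfl (fun k _ => this k)]
          simp
          rfl
        unfold _root_.val at h1 h2 ⊢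
        simp only [Sum.elim_inr] at h1
        omega
      rw [hL, hR]
      exact hEF i j
end

section
/- Let w_1, …, w_ℓ be positive integers with ∑_{j∈[ℓ]} w_j = 2t and w_j < t for every j. Construct the fair-division-with-social-impact instance with two agents a_1, a_2 and items g_1, …, g_ℓ, G_1, G_2, where for both agents v(g_j) = w_j and s(g_j) = 1; v_{a_1}(G_1) = 0, s_{a_1}(G_1) = 1, v_{a_2}(G_1) = t, s_{a_2}(G_1) = 0; and v_{a_1}(G_2) = t, s_{a_1}(G_2) = 0, v_{a_2}(G_2) = 0, s_{a_2}(G_2) = 1. Then this instance admits an allocation that is simultaneously SIM and EF1 if and only if there exists J ⊆ [ℓ] with ∑_{j∈J} w_j = t. -/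
open Finset

variable {N M : Type*}

lemma sum_val_bundle [Fintype M] [Fintype N] [DecidableEq N]
    (A : M → N) (f : N → M → ℕ) :
    ∑ i : N, _root_.val (f i) (bundle A i) = ∑ g : M, f (A g) g := by
  unfold _root_.val bundle
  rw [← Finset.sum_fiberwise Finset.univ A (fun g => f (A g) g)]
  exact Finset.sum_congr rfl fun i _ => Finset.sum_congr rfl fun g hg => by
    rw [(Finset.mem_filter.1 hg).2]

lemma val_le_val_erase_add (f : M → ℕ) [DecidableEq M] (S : Finset M) (g : M) :
    _root_.val f S ≤ _root_.val f (S.erase g) + f g := by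
  unfold _root_.val
  by_cases h : g ∈ S
  · exact le_of_eq (Finset.sum_erase_add S f h).symm
  · rw [Finset.erase_eq_of_notMem h]; exact Nat.le_add_right _ _

/-- Partition reduction instance: two agents `0 = a₁`, `1 = a₂`, items
`Sum.inl j = g_j` (value `w j`, impact `1` for both) and `Sum.inr k = G_{k+1}`
(`v_{a₁}(G₁) = 0, s_{a₁}(G₁) = 1, v_{a₂}(G₁) = t, s_{a₂}(G₁) = 0` and
`v_{a₁}(G₂) = t, s_{a₁}(G₂) = 0, v_{a₂}(G₂) = 0, s_{a₂}(G₂) = 1`).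
A SIM and EF1 allocation exists iff the integers `w` can be partitioned. -/
theorem sim_ef1_iff_partition (ℓ t : ℕ) (w : Fin ℓ → ℕ)
    (hw : ∀ j, 0 < w j) (hsum : ∑ j, w j = 2 * t) (hwt : ∀ j, w j < t) :
    (∃ A : (Fin ℓ ⊕ Fin 2) → Fin 2,
        SIM (fun i => Sum.elim (fun _ : Fin ℓ => 1)
              (fun k : Fin 2 => if k = i then 1 else 0)) A ∧
        EF1 (fun i => Sum.elim (fun j : Fin ℓ => w j)
              (fun k : Fin 2 => if k = i then 0 else t)) A) ↔
    (∃ J : Finset (Fin ℓ), ∑ j ∈ J, w j = t) := by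
  set sfun : Fin 2 → (Fin ℓ ⊕ Fin 2) → ℕ := fun i => Sum.elim (fun _ : Fin ℓ => 1)
      (fun k : Fin 2 => if k = i then 1 else 0) with hsfun
  set vfun : Fin 2 → (Fin ℓ ⊕ Fin 2) → ℕ := fun i => Sum.elim (fun j : Fin ℓ => w j)
      (fun k : Fin 2 => if k = i then 0 else t) with hvfun
  -- total impact formula
  have hT : ∀ A : (Fin ℓ ⊕ Fin 2) → Fin 2,
      ∑ i : Fin 2, _root_.val (sfun i) (bundle A i) =
        ℓ + ((if (0 : Fin 2) = A (Sum.inr 0) then 1 else 0)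
          + (if (1 : Fin 2) = A (Sum.inr 1) then 1 else 0)) := by
    intro A
    rw [sum_val_bundle, Fintype.sum_sum_type, Fin.sum_univ_two]
    simp [hsfun]
  -- SIM characterization
  have hSIM : ∀ A : (Fin ℓ ⊕ Fin 2) → Fin 2,
      SIM sfun A ↔ (A (Sum.inr 0) = 0 ∧ A (Sum.inr 1) = 1) := by
    intro A
    constructor
    · intro h
      have h0 := h (Sum.elim (fun _ => 0) id)
      rw [hT, hT] at h0
      simp only [Sum.elim_inr, id] at h0
      norm_num at h0
      split_ifs at h0 with h1 h2 <;> first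
        | exact ⟨h1.symm, h2.symm⟩
        | omega
    · rintro ⟨h0, h1⟩ A'
      rw [ge_iff_le, hT, hT, h0, h1]
      norm_num
      split_ifs <;> omega
  -- bundle value formula
  have key : ∀ (A : (Fin ℓ ⊕ Fin 2) → Fin 2) (f : (Fin ℓ ⊕ Fin 2) → ℕ) (i' : Fin 2),
      _root_.val f (bundle A i') =
        (∑ j : Fin ℓ, if A (Sum.inl j) = i' then f (Sum.inl j) else 0)
      + ((if A (Sum.inr 0) = i' then f (Sum.inr 0) else 0)
        + (if A (Sum.inr 1) = i' then f (Sum.inr 1) else 0)) := by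
    intro A f i'
    unfold _root_.val bundle
    rw [Finset.sum_filter, Fintype.sum_sum_type, Fin.sum_univ_two]
  have hXY : ∀ A : (Fin ℓ ⊕ Fin 2) → Fin 2,
      (∑ j : Fin ℓ, if A (Sum.inl j) = 0 then w j else 0)
      + (∑ j : Fin ℓ, if A (Sum.inl j) = 1 then w j else 0) = 2 * t := by
    intro A
    rw [← hsum, ← Finset.sum_add_distrib]
    refine Finset.sum_congr rfl fun j _ => ?_
    have : A (Sum.inl j) = 0 ∨ A (Sum.inl j) = 1 := by omega
    rcases this with h | h <;> simp [h]
  constructor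
  · rintro ⟨A, hS, hE⟩
    obtain ⟨hA0, hA1⟩ := (hSIM A).1 hS
    set X := ∑ j : Fin ℓ, if A (Sum.inl j) = 0 then w j else 0 with hX
    set Y := ∑ j : Fin ℓ, if A (Sum.inl j) = 1 then w j else 0 with hY
    have hxy : X + Y = 2 * t := hXY A
    have h00 : _root_.val (vfun 0) (bundle A 0) = X := by
      rw [key A (vfun 0) 0, hA0, hA1]
      simp [hvfun, hX]
    have h01 : _root_.val (vfun 0) (bundle A 1) = Y + t := by
      rw [key A (vfun 0) 1, hA0, hA1]
      simp [hvfun, hY]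
    have h11 : _root_.val (vfun 1) (bundle A 1) = Y := by
      rw [key A (vfun 1) 1, hA0, hA1]
      simp [hvfun, hY]
    have h10 : _root_.val (vfun 1) (bundle A 0) = X + t := by
      rw [key A (vfun 1) 0, hA0, hA1]
      simp [hvfun, hX]
    have hvle : ∀ (i : Fin 2) (g : Fin ℓ ⊕ Fin 2), vfun i g ≤ t := by
      intro i g
      rcases g with j | k
      · exact le_of_lt (hwt j)
      · simp only [hvfun, Sum.elim_inr]
        split_ifs <;> omega
    have e1 : X ≥ Y := by
      obtain ⟨g, hg⟩ := hE 0 1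
      have h2 := val_le_val_erase_add (vfun 0) (bundle A 1) g
      have h3 := hvle 0 g
      rw [h00] at hg; rw [h01] at h2
      omega
    have e2 : Y ≥ X := by
      obtain ⟨g, hg⟩ := hE 1 0
      have h2 := val_le_val_erase_add (vfun 1) (bundle A 0) g
      have h3 := hvle 1 g
      rw [h11] at hg; rw [h10] at h2
      omega
    refine ⟨Finset.univ.filter fun j => A (Sum.inl j) = 0, ?_⟩
    rw [Finset.sum_filter, ← hX]
    omega
  · rintro ⟨J, hJ⟩
    refine ⟨Sum.elim (fun j => if j ∈ J then 0 else 1) (fun k => k), ?_, ?_⟩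
    · exact (hSIM _).2 ⟨rfl, rfl⟩
    · set A : (Fin ℓ ⊕ Fin 2) → Fin 2 :=
        Sum.elim (fun j => if j ∈ J then 0 else 1) (fun k => k) with hA
      have hA0 : A (Sum.inr 0) = 0 := rfl
      have hA1 : A (Sum.inr 1) = 1 := rfl
      have hs0 : (∑ j : Fin ℓ, if A (Sum.inl j) = 0 then w j else 0) = t := by
        rw [← hJ]
        have hterm : ∀ j : Fin ℓ, (if A (Sum.inl j) = 0 then w j else 0)
            = if j ∈ J then w j else 0 := by
          intro j; by_cases h : j ∈ J <;> simp [hA, h]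
        rw [Finset.sum_congr rfl fun j _ => hterm j, Finset.sum_ite_mem, Finset.univ_inter]
      have hs1 : (∑ j : Fin ℓ, if A (Sum.inl j) = 1 then w j else 0) = t := by
        have := hXY A
        omega
      have hvl : ∀ (i : Fin 2) (j : Fin ℓ), vfun i (Sum.inl j) = w j := fun _ _ => rfl
      have h00 : _root_.val (vfun 0) (bundle A 0) = t := by
        rw [key A (vfun 0) 0]
        simp only [hvl]
        rw [hs0, hA0, hA1]
        simp [hvfun]
      have h01 : _root_.val (vfun 0) (bundle A 1) = t + t := by
        rw [key A (vfun 0) 1]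
        simp only [hvl]
        rw [hs1, hA0, hA1]
        simp [hvfun]
      have h11 : _root_.val (vfun 1) (bundle A 1) = t := by
        rw [key A (vfun 1) 1]
        simp only [hvl]
        rw [hs1, hA0, hA1]
        simp [hvfun]
      have h10 : _root_.val (vfun 1) (bundle A 0) = t + t := by
        rw [key A (vfun 1) 0]
        simp only [hvl]
        rw [hs0, hA0, hA1]
        simp [hvfun]
      intro i j
      have hii : ∀ i' : Fin 2, ∃ g, _root_.val (vfun i') (bundle A i')
          ≥ _root_.val (vfun i') ((bundle A i').erase g) := by
        intro i'
        exact ⟨Sum.inr 0, Finset.sum_le_sum_of_subset (Finset.erase_subset _ _)⟩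
      have h01' : ∃ g, _root_.val (vfun 0) (bundle A 0)
          ≥ _root_.val (vfun 0) ((bundle A 1).erase g) := by
        refine ⟨Sum.inr 1, ?_⟩
        have memb : (Sum.inr 1 : Fin ℓ ⊕ Fin 2) ∈ bundle A 1 :=
          Finset.mem_filter.2 ⟨Finset.mem_univ _, hA1⟩
        have heq : _root_.val (vfun 0) ((bundle A 1).erase (Sum.inr 1)) + vfun 0 (Sum.inr 1)
            = _root_.val (vfun 0) (bundle A 1) := Finset.sum_erase_add _ _ memb
        have hv : vfun 0 (Sum.inr 1) = t := by simp [hvfun]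
        rw [h00]; rw [h01, hv] at heq
        omega
      have h10' : ∃ g, _root_.val (vfun 1) (bundle A 1)
          ≥ _root_.val (vfun 1) ((bundle A 0).erase g) := by
        refine ⟨Sum.inr 0, ?_⟩
        have memb : (Sum.inr 0 : Fin ℓ ⊕ Fin 2) ∈ bundle A 0 :=
          Finset.mem_filter.2 ⟨Finset.mem_univ _, hA0⟩
        have heq : _root_.val (vfun 1) ((bundle A 0).erase (Sum.inr 0)) + vfun 1 (Sum.inr 0)
            = _root_.val (vfun 1) (bundle A 0) := Finset.sum_erase_add _ _ memb
        have hv : vfun 1 (Sum.inr 0) = t := by simp [hvfun]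
        rw [h11]; rw [h10, hv] at heq
        omega
      have hij : i = 0 ∨ i = 1 := by omega
      have hjj : j = 0 ∨ j = 1 := by omega
      rcases hij with rfl | rfl <;> rcases hjj with rfl | rfl
      · exact hii 0
      · exact h01'
      · exact h10'
      · exact hii 1
end

section
/- For every fair-division-with-social-impact instance (N, M, (v_i), (s_i)) with N nonempty, there exists an allocation that is simultaneously SIM and SA-EFL. -/
open Finset

variable {N M : Type*}

/-- SA-EFL: for every pair of agents `i, j`, either `s_i(A_j) < s_j(A_j)`, or
`A_j` contains at most one item positively valued by `i`, or there is `g ∈ A_j`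
with `v_i(A_i) ≥ v_i(A_j \ {g})` and `v_i(A_i) ≥ v_i(g)`. -/
def SAEFL [Fintype M] [DecidableEq N] [DecidableEq M]
    (v s : N → M → ℕ) (A : M → N) : Prop :=
  ∀ i j : N,
    val (s i) (bundle A j) < val (s j) (bundle A j) ∨
    ((bundle A j).filter fun g => 0 < v i g).card ≤ 1 ∨
    ∃ g ∈ bundle A j,
      val (v i) (bundle A i) ≥ val (v i) ((bundle A j).erase g) ∧
      val (v i) (bundle A i) ≥ v i g

set_option linter.unusedSectionVars false

namespace SimSaeflAux
lemma val_le_of_subset (f : M → ℕ) {S T : Finset M} (h : S ⊆ T) : val f S ≤ val f T :=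
  Finset.sum_le_sum_of_subset h
lemma single_le_val (f : M → ℕ) {g : M} {S : Finset M} (h : g ∈ S) : f g ≤ val f S :=
  Finset.single_le_sum (fun _ _ => Nat.zero_le _) h
lemma val_insert [DecidableEq M] (f : M → ℕ) {g : M} {S : Finset M} (h : g ∉ S) :
    val f (insert g S) = f g + val f S :=
  Finset.sum_insert h
section
variable [Fintype N] [Fintype M] [DecidableEq N] [DecidableEq M]
def pbun (A : M → Option N) (i : N) : Finset M := univ.filter fun g => A g = some i
def Rem (A : M → Option N) : Finset M := univ.filter fun g => A g = none
def ItemSIM (s : N → M → ℕ) (A : M → Option N) : Prop :=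
  ∀ g i j, A g = some j → s i g ≤ s j g
def Cond (vi si sj : M → ℕ) (w : ℕ) (B : Finset M) : Prop :=
  val si B < val sj B ∨
  (B.filter fun g => 0 < vi g).card ≤ 1 ∨
  ∃ g ∈ B, w ≥ val vi (B.erase g) ∧ w ≥ vi g
def Inv (v s : N → M → ℕ) (A : M → Option N) : Prop :=
  ItemSIM s A ∧ ∀ i j, Cond (v i) (s i) (s j) (val (v i) (pbun A i)) (pbun A j)
def W (v : N → M → ℕ) (A : M → Option N) : ℕ := ∑ i, val (v i) (pbun A i)
def phi (v : N → M → ℕ) (A : M → Option N) : ℕ :=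
  ((∑ i, ∑ g, v i g) - W v A) * (Fintype.card M + 1) + (Rem A).card
def Envy (v s : N → M → ℕ) (A : M → Option N) (i j : N) : Prop :=
  val (s j) (pbun A j) ≤ val (s i) (pbun A j) ∧
  val (v i) (pbun A i) < val (v i) (pbun A j)
lemma cond_mono {vi si sj : M → ℕ} {w w' : ℕ} {B : Finset M}
    (h : Cond vi si sj w B) (hw : w ≤ w') : Cond vi si sj w' B := by
  rcases h with h | h | ⟨g, hg, h1, h2⟩
  · exact Or.inl h
  · exact Or.inr (Or.inl h)
  · exact Or.inr (Or.inr ⟨g, hg, le_trans h1 hw, le_trans h2 hw⟩)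
lemma cond_of_no_envy {vi si sj : M → ℕ} {w : ℕ} {B : Finset M}
    (h : val vi B ≤ w) : Cond vi si sj w B := by
  rcases B.eq_empty_or_nonempty with rfl | ⟨g, hg⟩
  · exact Or.inr (Or.inl (by simp))
  · refine Or.inr (Or.inr ⟨g, hg, ?_, ?_⟩)
    · exact le_trans (val_le_of_subset _ (Finset.erase_subset _ _)) h
    · exact le_trans (single_le_val _ hg) h
lemma cond_owner {vi si sj sj' : M → ℕ} {w : ℕ} {B : Finset M}
    (heq : val sj B = val sj' B) (h : Cond vi si sj w B) : Cond vi si sj' w B := by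
  rcases h with h | h | h
  · exact Or.inl (heq ▸ h)
  · exact Or.inr (Or.inl h)
  · exact Or.inr (Or.inr h)
lemma W_le_B (v : N → M → ℕ) (A : M → Option N) : W v A ≤ ∑ i, ∑ g, v i g := by
  refine Finset.sum_le_sum fun i _ => ?_
  exact val_le_of_subset (v i) (Finset.filter_subset _ _)
lemma rem_card_le (A : M → Option N) : (Rem A).card ≤ Fintype.card M :=
  Finset.card_filter_le _ _
lemma phi_lt_of_W_lt {v : N → M → ℕ} {A A' : M → Option N}
    (h : W v A < W v A') (hle : W v A' ≤ ∑ i, ∑ g, v i g) : phi v A' < phi v A := by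
  unfold phi
  set B := ∑ i, ∑ g, v i g with hB
  set m := Fintype.card M
  have hk : B - W v A' < B - W v A := by omega
  have h1 : (B - W v A') * (m + 1) + (Rem A').card < (B - W v A' + 1) * (m + 1) := by
    have := rem_card_le A'
    nlinarith
  have h2 : (B - W v A' + 1) * (m + 1) ≤ (B - W v A) * (m + 1) :=
    Nat.mul_le_mul_right _ (by omega)
  omega
lemma phi_lt_of_W_le {v : N → M → ℕ} {A A' : M → Option N}
    (h : W v A ≤ W v A') (hr : (Rem A').card < (Rem A).card) : phi v A' < phi v A := by
  unfold phi
  have : ((∑ i, ∑ g, v i g) - W v A') * (Fintype.card M + 1) ≤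
      ((∑ i, ∑ g, v i g) - W v A) * (Fintype.card M + 1) :=
    Nat.mul_le_mul_right _ (by omega)
  omega

lemma mem_pbun {A : M → Option N} {k : N} {g' : M} : g' ∈ pbun A k ↔ A g' = some k := by
  simp [pbun]

-- itemwise social impact comparison on a bundle
lemma val_s_le {s : N → M → ℕ} {A : M → Option N} (hs : ItemSIM s A) (i j : N) :
    val (s i) (pbun A j) ≤ val (s j) (pbun A j) := by
  refine Finset.sum_le_sum fun g hg => ?_
  exact hs g i j (mem_pbun.mp hg)

lemma swap_step {v s : N → M → ℕ} {A : M → Option N} (hInv : Inv v s A)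
    {g : M} (hg : A g = none) {i : N} (hmax : ∀ k, s k g ≤ s i g)
    (hpoor : val (v i) (pbun A i) < v i g) :
    ∃ A', Inv v s A' ∧ phi v A' < phi v A := by
  classical
  obtain ⟨hSIM, hC⟩ := hInv
  set A' : M → Option N :=
    fun g' => if g' = g then some i else if A g' = some i then none else A g' with hA'
  have hAg' : ∀ g' k, A' g' = some k ↔
      (g' = g ∧ k = i) ∨ (g' ≠ g ∧ A g' ≠ some i ∧ A g' = some k) := by
    intro g' k
    by_cases hg' : g' = g
    · subst hg'
      simp only [hA', if_pos rfl]
      constructor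
      · intro h; exact Or.inl ⟨by trivial, (Option.some_injective _ h).symm⟩
      · rintro (⟨-, rfl⟩ | ⟨h, -⟩)
        · rfl
        · exact absurd rfl h
    · by_cases hA : A g' = some i
      · simp [hA', hg', hA]
      · simp [hA', hg', hA]
  have hpi : pbun A' i = {g} := by
    ext g'
    rw [mem_pbun, hAg', Finset.mem_singleton]
    constructor
    · rintro (⟨rfl, -⟩ | ⟨-, hni, hsome⟩)
      · rfl
      · exact absurd hsome hni
    · rintro rfl; exact Or.inl ⟨rfl, rfl⟩
  have hpk : ∀ k, k ≠ i → pbun A' k = pbun A k := by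
    intro k hk
    ext g'
    rw [mem_pbun, mem_pbun, hAg']
    constructor
    · rintro (⟨-, rfl⟩ | ⟨-, -, h⟩)
      · exact absurd rfl hk
      · exact h
    · intro h
      refine Or.inr ⟨?_, ?_, h⟩
      · rintro rfl; rw [hg] at h; exact absurd h (by simp)
      · rw [h]; intro h'
        exact hk (Option.some_injective _ h')
  have hvi : val (v i) (pbun A' i) = v i g := by
    rw [hpi]; simp [_root_.val]
  have hw : ∀ k, val (v k) (pbun A k) ≤ val (v k) (pbun A' k) := by
    intro k
    by_cases hk : k = i
    · subst hk; rw [hvi]; exact le_of_lt hpoor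
    · rw [hpk k hk]
  refine ⟨A', ⟨?_, ?_⟩, ?_⟩
  · -- ItemSIM
    intro g' a b hab
    rw [hAg'] at hab
    rcases hab with ⟨rfl, rfl⟩ | ⟨-, -, h⟩
    · exact hmax a
    · exact hSIM g' a b h
  · -- EFL conditions
    intro a b
    by_cases hb : b = i
    · subst hb
      rw [hpi]
      refine Or.inr (Or.inl ?_)
      calc (({g} : Finset M).filter fun g' => 0 < v a g').card
          ≤ ({g} : Finset M).card := Finset.card_filter_le _ _
        _ = 1 := Finset.card_singleton g
    · rw [hpk b hb]
      exact cond_mono (cond_owner rfl (hC a b)) (hw a)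
  · -- phi decreases
    refine phi_lt_of_W_lt ?_ (W_le_B v A')
    refine Finset.sum_lt_sum (fun k _ => hw k) ⟨i, Finset.mem_univ i, ?_⟩
    rw [hvi]; exact hpoor

lemma assign_step {v s : N → M → ℕ} {A : M → Option N} (hInv : Inv v s A)
    {g : M} (hg : A g = none) {j : N} (hmaxj : ∀ k, s k g ≤ s j g)
    (hnoswap : ∀ i, (∀ k, s k g ≤ s i g) → v i g ≤ val (v i) (pbun A i))
    (hsource : ∀ i, (∀ k, s k g ≤ s i g) → ¬ Envy v s A i j) :
    ∃ A', Inv v s A' ∧ phi v A' < phi v A := by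
  classical
  obtain ⟨hSIM, hC⟩ := hInv
  set A' := Function.update A g (some j) with hA'
  have hAg' : ∀ g' k, A' g' = some k ↔ (g' = g ∧ k = j) ∨ (g' ≠ g ∧ A g' = some k) := by
    intro g' k
    by_cases hg' : g' = g
    · subst hg'
      rw [hA', Function.update_self]
      constructor
      · intro h; exact Or.inl ⟨rfl, (Option.some_injective _ h).symm⟩
      · rintro (⟨-, rfl⟩ | ⟨h, -⟩)
        · rfl
        · exact absurd rfl h
    · rw [hA', Function.update_of_ne hg']
      constructor
      · intro h; exact Or.inr ⟨hg', h⟩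
      · rintro (⟨h, -⟩ | ⟨-, h⟩)
        · exact absurd h hg'
        · exact h
  have hgnot : g ∉ pbun A j := by rw [mem_pbun, hg]; simp
  have hpj : pbun A' j = insert g (pbun A j) := by
    ext g'
    rw [mem_pbun, hAg', Finset.mem_insert, mem_pbun]
    constructor
    · rintro (⟨rfl, -⟩ | ⟨-, h⟩)
      · exact Or.inl rfl
      · exact Or.inr h
    · rintro (rfl | h)
      · exact Or.inl ⟨rfl, rfl⟩
      · refine Or.inr ⟨?_, h⟩
        rintro rfl; rw [hg] at h; exact absurd h (by simp)
  have hpk : ∀ k, k ≠ j → pbun A' k = pbun A k := by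
    intro k hk
    ext g'
    rw [mem_pbun, mem_pbun, hAg']
    constructor
    · rintro (⟨-, rfl⟩ | ⟨-, h⟩)
      · exact absurd rfl hk
      · exact h
    · intro h
      refine Or.inr ⟨?_, h⟩
      rintro rfl; rw [hg] at h; exact absurd h (by simp)
  have hvalins : ∀ f : M → ℕ, val f (pbun A' j) = f g + val f (pbun A j) := by
    intro f; rw [hpj, val_insert f hgnot]
  have hw : ∀ k, val (v k) (pbun A k) ≤ val (v k) (pbun A' k) := by
    intro k
    by_cases hk : k = j
    · subst hk; rw [hvalins]; omega
    · rw [hpk k hk]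
  refine ⟨A', ⟨?_, ?_⟩, ?_⟩
  · -- ItemSIM
    intro g' a b hab
    rw [hAg'] at hab
    rcases hab with ⟨rfl, rfl⟩ | ⟨-, h⟩
    · exact hmaxj a
    · exact hSIM g' a b h
  · -- EFL conditions
    intro a b
    by_cases hb : b = j
    · subst hb
      by_cases hab : a = b
      · subst hab; exact cond_of_no_envy le_rfl
      · rw [hpk a hab]
        by_cases hT : ∀ k, s k g ≤ s a g
        · -- a also has maximal social impact for g
          have hvg : v a g ≤ val (v a) (pbun A a) := hnoswap a hT
          have hne := hsource a hT
          simp only [Envy, not_and, not_lt] at hne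
          by_cases htie : val (s b) (pbun A b) ≤ val (s a) (pbun A b)
          · -- no envy towards j
            refine Or.inr (Or.inr ⟨g, ?_, ?_, hvg⟩)
            · rw [hpj]; exact Finset.mem_insert_self g _
            · rw [hpj, Finset.erase_insert hgnot]
              exact hne htie
          · -- strictly smaller social impact
            refine Or.inl ?_
            rw [hvalins, hvalins]
            have h1 : s a g ≤ s b g := hmaxj a
            have h2 : val (s a) (pbun A b) < val (s b) (pbun A b) := lt_of_not_ge htie
            omega
        · -- a does not have maximal impact for g
          push_neg at hT
          obtain ⟨k, hk⟩ := hT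
          have h1 : s a g < s b g := lt_of_lt_of_le hk (hmaxj k)
          have h2 : val (s a) (pbun A b) ≤ val (s b) (pbun A b) := val_s_le hSIM a b
          refine Or.inl ?_
          rw [hvalins, hvalins]
          omega
    · rw [hpk b hb]
      exact cond_mono (hC a b) (hw a)
  · -- phi decreases
    refine phi_lt_of_W_le (Finset.sum_le_sum fun k _ => hw k) ?_
    have hRem : Rem A' = (Rem A).erase g := by
      ext g'
      by_cases hg' : g' = g
      · subst hg'
        simp [Rem, hA', Function.update_self]
      · simp [Rem, hA', Function.update_of_ne hg', hg']
    have hgRem : g ∈ Rem A := by simp [Rem, hg]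
    rw [hRem, Finset.card_erase_of_mem hgRem]
    have := Finset.card_pos.mpr ⟨g, hgRem⟩
    omega

lemma rotate_step {v s : N → M → ℕ} {A : M → Option N} (hInv : Inv v s A)
    {T : Finset N} (hT : T.Nonempty)
    (hE : ∀ j ∈ T, ∃ i ∈ T, Envy v s A i j) :
    ∃ A', Inv v s A' ∧ phi v A' < phi v A := by
  classical
  obtain ⟨hSIM, hC⟩ := hInv
  have hf : ∀ u : {x // x ∈ T}, ∃ w : {x // x ∈ T}, Envy v s A (w : N) (u : N) := by
    intro u
    obtain ⟨i, hiT, hE'⟩ := hE u u.2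
    exact ⟨⟨i, hiT⟩, hE'⟩
  choose f hfE using hf
  obtain ⟨j0, hj0⟩ := hT
  set c : ℕ → {x // x ∈ T} := fun t => f^[t] ⟨j0, hj0⟩ with hc
  have hcsucc : ∀ t, c (t + 1) = f (c t) := fun t => Function.iterate_succ_apply' f t _
  have hEc : ∀ t, Envy v s A (c (t+1) : N) (c t : N) := by
    intro t; rw [hcsucc]; exact hfE (c t)
  have hex : ∃ n, ∃ m, m < n ∧ c m = c n := by
    obtain ⟨x, y, hxy, hcex⟩ := Finite.exists_ne_map_eq_of_infinite c
    rcases lt_or_gt_of_ne hxy with h | h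
    · exact ⟨y, x, h, hcex⟩
    · exact ⟨x, y, h, hcex.symm⟩
  set bb := Nat.find hex with hbb
  obtain ⟨a, hab, hcab⟩ := Nat.find_spec hex
  have hinj : ∀ t u, t < bb → u < bb → c t = c u → t = u := by
    intro t u ht hu heq
    by_contra hne
    rcases lt_or_gt_of_ne hne with h | h
    · exact absurd ⟨t, h, heq⟩ (Nat.find_min hex hu)
    · exact absurd ⟨u, h, heq.symm⟩ (Nat.find_min hex ht)
  have hinj' : ∀ t u, t < bb → u < bb → (c t : N) = (c u : N) → t = u :=
    fun t u ht hu h => hinj t u ht hu (Subtype.coe_injective h)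
  have hirr : ∀ t, (c (t+1) : N) ≠ (c t : N) := by
    intro t h
    have h2 := (hEc t).2
    rw [h] at h2
    exact lt_irrefl _ h2
  have ha1 : a + 1 < bb := by
    rcases lt_or_eq_of_le (Nat.succ_le_of_lt hab) with h | h
    · exact h
    · have h2 : a + 1 = bb := by omega
      exact absurd (congrArg Subtype.val (by rw [h2, hbb, ← hcab] : c (a+1) = c a)) (hirr a)
  set σ : N → N :=
    fun x => if h : ∃ t, a ≤ t ∧ t < bb ∧ (c t : N) = x then (c (Classical.choose h + 1) : N)
      else x with hσ
  have hσc : ∀ t, a ≤ t → t < bb → σ (c t : N) = (c (t+1) : N) := by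
    intro t h1 h2
    have hex' : ∃ u, a ≤ u ∧ u < bb ∧ (c u : N) = (c t : N) := ⟨t, h1, h2, rfl⟩
    simp only [hσ]
    rw [dif_pos hex']
    obtain ⟨h3, h4, h5⟩ := Classical.choose_spec hex'
    rw [hinj' _ _ h4 h2 h5]
  have hσfix : ∀ x, (¬ ∃ t, a ≤ t ∧ t < bb ∧ (c t : N) = x) → σ x = x := by
    intro x hx
    simp only [hσ]
    rw [dif_neg hx]
  have hσspec : ∀ x, σ x = x ∨
      (Envy v s A (σ x) x ∧ ∃ t, a ≤ t ∧ t < bb ∧ (c t : N) = x) := by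
    intro x
    by_cases h : ∃ t, a ≤ t ∧ t < bb ∧ (c t : N) = x
    · obtain ⟨t, h1, h2, h3⟩ := h
      subst h3
      refine Or.inr ⟨?_, ⟨t, h1, h2, rfl⟩⟩
      rw [hσc t h1 h2]
      exact hEc t
    · exact Or.inl (hσfix x h)
  have hhit : ∀ t, a ≤ t → t < bb → ∃ u, a ≤ u ∧ u < bb ∧ (c u : N) = (c (t+1) : N) := by
    intro t h1 h2
    rcases lt_or_eq_of_le (Nat.succ_le_of_lt h2) with h | h
    · exact ⟨t + 1, le_trans h1 (Nat.le_succ t), h, rfl⟩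
    · have h2 : t + 1 = bb := by omega
      refine ⟨a, le_rfl, hab, ?_⟩
      rw [h2, hbb, ← hcab]
  have hσinj : Function.Injective σ := by
    intro x y hxy
    by_cases hx : ∃ t, a ≤ t ∧ t < bb ∧ (c t : N) = x
    · obtain ⟨t, ht1, ht2, ht3⟩ := hx
      subst ht3
      rw [hσc t ht1 ht2] at hxy
      by_cases hy : ∃ u, a ≤ u ∧ u < bb ∧ (c u : N) = y
      · obtain ⟨u, hu1, hu2, hu3⟩ := hy
        subst hu3
        rw [hσc u hu1 hu2] at hxy
        -- (c (t+1) : N) = (c (u+1) : N)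
        rcases lt_or_eq_of_le (Nat.succ_le_of_lt ht2) with ht' | ht' <;>
          rcases lt_or_eq_of_le (Nat.succ_le_of_lt hu2) with hu' | hu'
        · have := hinj' _ _ ht' hu' hxy
          have : t = u := by omega
          rw [this]
        · -- u + 1 = bb : c (u+1) = c bb = c a
          exfalso
          have hu'' : u + 1 = bb := by omega
          have hya : (c (u+1) : N) = (c a : N) := by rw [hu'', hbb, ← hcab]
          rw [hya] at hxy
          have := hinj' _ _ ht' hab hxy
          omega
        · exfalso
          have ht'' : t + 1 = bb := by omega
          have hya : (c (t+1) : N) = (c a : N) := by rw [ht'', hbb, ← hcab]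
          rw [hya] at hxy
          have := hinj' _ _ hab hu' hxy
          omega
        · have : t = u := by omega
          rw [this]
      · exfalso
        rw [hσfix y hy] at hxy
        exact hy (hxy ▸ hhit t ht1 ht2)
    · rw [hσfix x hx] at hxy
      by_cases hy : ∃ u, a ≤ u ∧ u < bb ∧ (c u : N) = y
      · exfalso
        obtain ⟨u, hu1, hu2, hu3⟩ := hy
        subst hu3
        rw [hσc u hu1 hu2] at hxy
        exact hx (hxy ▸ hhit u hu1 hu2)
      · rw [hσfix y hy] at hxy
        exact hxy
  have hσbij : Function.Bijective σ := Finite.injective_iff_bijective.mp hσinj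
  set A' : M → Option N := fun g => (A g).map σ with hA'
  have hpb : ∀ x, pbun A' (σ x) = pbun A x := by
    intro x
    ext g'
    rw [mem_pbun, mem_pbun, hA']
    constructor
    · intro h
      obtain ⟨u, hu1, hu2⟩ := Option.map_eq_some_iff.mp h
      rw [hσinj hu2] at hu1
      exact hu1
    · intro h
      simp [h]
  -- social impact values transported
  have hsval : ∀ x, val (s (σ x)) (pbun A x) = val (s x) (pbun A x) := by
    intro x
    rcases hσspec x with h | ⟨hE', -⟩
    · rw [h]
    · exact le_antisymm (val_s_le hSIM _ _) hE'.1
  have hsitem : ∀ x, ∀ g' ∈ pbun A x, s (σ x) g' = s x g' := by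
    intro x
    have hle : ∀ g' ∈ pbun A x, s (σ x) g' ≤ s x g' := by
      intro g' hg'
      exact hSIM g' _ x (mem_pbun.mp hg')
    intro g' hg'
    exact (Finset.sum_eq_sum_iff_of_le hle).mp (hsval x) g' hg'
  have hw : ∀ k, val (v k) (pbun A k) ≤ val (v k) (pbun A' k) := by
    intro k
    obtain ⟨x, rfl⟩ := hσbij.surjective k
    rw [hpb]
    rcases hσspec x with h | ⟨hE', -⟩
    · rw [h]
    · exact le_of_lt hE'.2
  refine ⟨A', ⟨?_, ?_⟩, ?_⟩
  · -- ItemSIM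
    intro g' k b hb
    rw [hA'] at hb
    obtain ⟨x, hx1, hx2⟩ := Option.map_eq_some_iff.mp hb
    subst hx2
    have hg'x : g' ∈ pbun A x := mem_pbun.mpr hx1
    rw [hsitem x g' hg'x]
    exact hSIM g' k x hx1
  · -- EFL conditions
    intro i j
    obtain ⟨x, rfl⟩ := hσbij.surjective j
    rw [hpb]
    exact cond_mono (cond_owner (hsval x).symm (hC i x)) (hw i)
  · -- phi decreases
    refine phi_lt_of_W_lt ?_ (W_le_B v A')
    have h1 : W v A' = ∑ x, val (v (σ x)) (pbun A x) := by
      rw [W, ← hσbij.sum_comp (fun y => val (v y) (pbun A' y))]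
      exact Finset.sum_congr rfl fun x _ => by rw [hpb]
    have h2 : W v A = ∑ x, val (v (σ x)) (pbun A (σ x)) := by
      rw [W, ← hσbij.sum_comp (fun y => val (v y) (pbun A y))]
    rw [h1, h2]
    refine Finset.sum_lt_sum (fun x _ => ?_) ⟨(c a : N), Finset.mem_univ _, ?_⟩
    · rcases hσspec x with h | ⟨hE', -⟩
      · rw [h]
      · exact le_of_lt hE'.2
    · have hs := hσc a le_rfl (lt_trans (Nat.lt_succ_self a) ha1)
      rw [hs]
      exact (hEc a).2
end
end SimSaeflAux

open SimSaeflAux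

/-- A SIM and SA-EFL allocation always exists. -/
theorem exists_sim_saefl
    [Fintype N] [Fintype M] [DecidableEq N] [DecidableEq M] [Nonempty N]
    (v s : N → M → ℕ) :
    ∃ A : M → N, SIM s A ∧ SAEFL v s A := by
  classical
  have h0 : Inv v s (fun _ : M => (none : Option N)) := by
    constructor
    · intro g i j h; exact absurd h (by simp)
    · intro i j
      refine Or.inr (Or.inl ?_)
      have hemp : pbun (fun _ : M => (none : Option N)) j = ∅ := by
        ext g'; simp [pbun]
      rw [hemp]; simp
  have hne : Set.Nonempty {n | ∃ A : M → Option N, Inv v s A ∧ phi v A = n} := ⟨_, _, h0, rfl⟩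
  obtain ⟨A, hA, hphi⟩ := Nat.sInf_mem hne
  have hmin : ∀ A' : M → Option N, Inv v s A' → phi v A ≤ phi v A' := by
    intro A' h'
    rw [hphi]
    exact Nat.sInf_le ⟨A', h', rfl⟩
  have hrem : Rem A = ∅ := by
    by_contra h
    obtain ⟨g, hg⟩ := Finset.nonempty_iff_ne_empty.mpr h
    have hgnone : A g = none := by simpa [Rem] using hg
    obtain ⟨jm, -, hjm⟩ :=
      Finset.exists_max_image (univ : Finset N) (fun i => s i g) Finset.univ_nonempty
    have hnoswap : ∀ i, (∀ k, s k g ≤ s i g) → v i g ≤ val (v i) (pbun A i) := by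
      intro i hi
      by_contra hlt
      obtain ⟨A', hI, hl⟩ := swap_step hA hgnone hi (lt_of_not_ge hlt)
      exact absurd (hmin A' hI) (not_le_of_gt hl)
    set T : Finset N := univ.filter (fun i => ∀ k, s k g ≤ s i g) with hT
    have hjm' : ∀ k, s k g ≤ s jm g := fun k => hjm k (Finset.mem_univ k)
    have hTne : T.Nonempty := ⟨jm, Finset.mem_filter.mpr ⟨Finset.mem_univ jm, hjm'⟩⟩
    have hsource : ∃ j ∈ T, ∀ i ∈ T, ¬ Envy v s A i j := by
      by_contra hs
      push_neg at hs
      obtain ⟨A', hI, hl⟩ := rotate_step hA hTne (fun j hj => hs j hj)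
      exact absurd (hmin A' hI) (not_le_of_gt hl)
    obtain ⟨j, hjT, hsrc⟩ := hsource
    have hjmax : ∀ k, s k g ≤ s j g := (Finset.mem_filter.mp hjT).2
    have hmemT : ∀ i, (∀ k, s k g ≤ s i g) → i ∈ T :=
      fun i hi => Finset.mem_filter.mpr ⟨Finset.mem_univ i, hi⟩
    obtain ⟨A', hI, hl⟩ := assign_step hA hgnone hjmax hnoswap
      (fun i hi => hsrc i (hmemT i hi))
    exact absurd (hmin A' hI) (not_le_of_gt hl)
  set F : M → N := fun g => (A g).getD (Classical.arbitrary N) with hF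
  have hsome : ∀ g, A g = some (F g) := by
    intro g
    cases hAg : A g with
    | none =>
      exfalso
      have hmem : g ∈ Rem A := by simp [Rem, hAg]
      rw [hrem] at hmem
      exact absurd hmem (Finset.notMem_empty g)
    | some x => simp [hF, hAg]
  have hbun : ∀ i, bundle F i = pbun A i := by
    intro i
    ext g'
    simp only [bundle, pbun, Finset.mem_filter, Finset.mem_univ, true_and]
    rw [hsome g', Option.some_inj]
  obtain ⟨hSIM, hC⟩ := hA
  refine ⟨F, ?_, ?_⟩
  · -- SIM
    intro A''
    have key : ∀ B : M → N, ∑ i, val (s i) (bundle B i) = ∑ g, s (B g) g := by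
      intro B
      rw [← Finset.sum_fiberwise univ B (fun g => s (B g) g)]
      refine Finset.sum_congr rfl fun i _ => ?_
      unfold _root_.val bundle
      refine Finset.sum_congr rfl fun g hg => ?_
      rw [(Finset.mem_filter.mp hg).2]
    rw [ge_iff_le, key A'', key F]
    refine Finset.sum_le_sum fun g _ => ?_
    exact hSIM g (A'' g) (F g) (hsome g)
  · -- SAEFL
    intro i j
    have h := hC i j
    unfold SimSaeflAux.Cond at h
    rw [hbun i, hbun j]
    exact h
end

section
/- For every integer r ≥ 1, consider the fair-division-with-social-impact instance with two agents a_1, a_2 and r+1 items g_1, …, g_{r+1}, where v_{a_1}(g_k) = v_{a_2}(g_k) = 10, s_{a_1}(g_k) = 0, and s_{a_2}(g_k) = 1 for every k. Then no SIM allocation is envy-free up to r items for agent a_1: in every SIM allocation A, for every set X ⊆ M with |X| ≤ r we have v_{a_1}(A_{a_1}) < v_{a_1}(A_{a_2} \ X). -/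
open Finset

variable {N M : Type*}

/-- Instance with two agents (`0 = a₁` socially unaware, `1 = a₂`) and `r + 1`
identical items with `v(g) = 10` for both agents, `s_{a₁}(g) = 0`, `s_{a₂}(g) = 1`.
In every SIM allocation, agent `a₁` envies `a₂` even up to the removal of any `r`
items from `a₂`'s bundle. -/
theorem no_sim_efr_for_unaware (r : ℕ) (hr : 1 ≤ r)
    (A : Fin (r + 1) → Fin 2)
    (hA : SIM (fun i : Fin 2 => fun _ : Fin (r + 1) => if i = 1 then 1 else 0) A)
    (X : Finset (Fin (r + 1))) (hX : X.card ≤ r) :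
    val (fun _ : Fin (r + 1) => (10 : ℕ)) (bundle A 0) <
    val (fun _ : Fin (r + 1) => (10 : ℕ)) ((bundle A 1) \ X) := by
  have key := hA (fun _ => 1)
  simp only [_root_.val, bundle, Fin.sum_univ_two, show ((0:Fin 2) = 1) = False by simp,
    show ((1:Fin 2) = 1) = True by simp, if_true, if_false, Finset.sum_const,
    Finset.sum_const_zero, smul_eq_mul, mul_one, zero_add] at key
  simp only [Finset.filter_true, Finset.card_univ, Fintype.card_fin, Nat.mul_zero,
    Nat.zero_add] at key
  have hcard : (Finset.univ.filter fun g : Fin (r+1) => A g = 1).card = r + 1 := by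
    have hle : (Finset.univ.filter fun g : Fin (r+1) => A g = 1).card ≤ r + 1 := by
      simpa using Finset.card_filter_le Finset.univ (fun g : Fin (r+1) => A g = 1)
    omega
  have hall : ∀ g : Fin (r+1), A g = 1 := by
    have heq := Finset.eq_univ_of_card (Finset.univ.filter fun g : Fin (r+1) => A g = 1)
      (by simpa using hcard)
    intro g
    have hg := heq.symm ▸ Finset.mem_univ g
    exact (Finset.mem_filter.mp hg).2
  have hb0 : bundle A 0 = ∅ := by
    ext g; simp [bundle, hall g]
  have hb1 : bundle A 1 = Finset.univ := by
    ext g; simp [bundle, hall g]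
  rw [hb0, hb1]
  simp only [_root_.val, Finset.sum_const, smul_eq_mul, Finset.sum_empty, Finset.card_empty]
  have : 1 ≤ (Finset.univ \ X).card := by
    have := Finset.card_sdiff_of_subset (Finset.subset_univ X)
    simp only [Finset.card_univ, Fintype.card_fin] at this
    omega
  omega
end

section
/- For every real α with 0 ≤ α < 1, the fair-division-with-social-impact instance with two agents a_1, a_2 and two items g_1, g_2, where v_{a_1}(g_k) = v_{a_2}(g_k) = 1, s_{a_1}(g_k) = 1, and s_{a_2}(g_k) = α for k ∈ {1,2}, admits no allocation that is simultaneously SIM and α-SA-EF1. In particular, for every α ∈ [0,1), a SIM and α-SA-EF1 allocation is not guaranteed to exist. -/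
open Finset

variable {N M : Type*}

/-- The (additive) real value of a bundle `S` under the item-values `f`. -/
def valR (f : M → ℝ) (S : Finset M) : ℝ := ∑ g ∈ S, f g

/-- An allocation is social impact maximizing (SIM), for real-valued impacts. -/
def SIMR [Fintype N] [Fintype M] [DecidableEq N] (s : N → M → ℝ) (A : M → N) : Prop :=
  ∀ A' : M → N, ∑ i : N, valR (s i) (bundle A i) ≥ ∑ i : N, valR (s i) (bundle A' i)

/-- `α`-SA-EF1: for every pair of agents `i, j`, either there is an item `g` with
`v_i(A_i) ≥ v_i(A_j \ {g})`, or `s_i(A_j) < α · s_j(A_j)`. -/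
def alphaSAEF1 [Fintype M] [DecidableEq N] [DecidableEq M]
    (α : ℝ) (v : N → M → ℕ) (s : N → M → ℝ) (A : M → N) : Prop :=
  ∀ i j : N,
    (∃ g : M, val (v i) (bundle A i) ≥ val (v i) ((bundle A j).erase g)) ∨
    valR (s i) (bundle A j) < α * valR (s j) (bundle A j)

/-- For every `0 ≤ α < 1`, the two-agent, two-item instance with `v(g) = 1` for
both agents and `s_{a₁}(g) = 1`, `s_{a₂}(g) = α` admits no SIM and `α`-SA-EF1
allocation; in particular a SIM and `α`-SA-EF1 allocation need not exist. -/
theorem no_sim_alpha_saef1 (α : ℝ) (h0 : 0 ≤ α) (h1 : α < 1) :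
    ¬ ∃ A : Fin 2 → Fin 2,
        SIMR (fun i : Fin 2 => fun _ : Fin 2 => if i = 0 then (1 : ℝ) else α) A ∧
        alphaSAEF1 α (fun _ : Fin 2 => fun _ : Fin 2 => (1 : ℕ))
          (fun i : Fin 2 => fun _ : Fin 2 => if i = 0 then (1 : ℝ) else α) A := by
  rintro ⟨A, hS, hE⟩
  have key := hS (fun _ => 0)
  have hval : ∀ (s : Fin 2 → ℝ) (B : Fin 2 → Fin 2) (i : Fin 2),
      valR s (bundle B i) = (if B 0 = i then s 0 else 0) + (if B 1 = i then s 1 else 0) := by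
    intro s B i
    simp [valR, bundle, Finset.sum_filter, Fin.sum_univ_two]
  have two_cases : ∀ k : Fin 2, k = 0 ∨ k = 1 := by decide
  have hA : A 0 = 0 ∧ A 1 = 0 := by
    simp only [Fin.sum_univ_two, hval, ge_iff_le] at key
    rcases two_cases (A 0) with h0' | h0' <;>
      rcases two_cases (A 1) with h1' | h1' <;>
      simp [h0', h1'] at key ⊢ <;> linarith
  -- now the allocation gives everything to agent 0; check α-SA-EF1 fails for i = 1, j = 0
  have hb0 : bundle A 0 = Finset.univ := by
    ext g
    rcases two_cases g with hg | hg <;> simp [bundle, hg, hA.1, hA.2]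
  have hb1 : bundle A 1 = ∅ := by
    ext g
    rcases two_cases g with hg | hg <;> simp [bundle, hg, hA.1, hA.2]
  rcases hE 1 0 with ⟨g, hg⟩ | h
  · rw [hb0, hb1] at hg
    have hc : ((Finset.univ : Finset (Fin 2)).erase g).card = 1 := by
      rw [Finset.card_erase_of_mem (Finset.mem_univ g)]
      simp
    simp [_root_.val, hc] at hg
  · rw [hb0] at h
    simp [valR, Fin.sum_univ_two] at h
    linarith
end

section
/- Let w_1, …, w_ℓ be positive integers with ∑_{j∈[ℓ]} w_j = 2t and w_j < t for every j. Construct the fair-division-with-social-impact instance with two agents a_1, a_2 and items g_1, …, g_ℓ, G_1, G_2, G_3, where for both agents v(g_j) = w_j and s(g_j) = 1; for k ∈ {1,2}, v_{a_1}(G_k) = t, s_{a_1}(G_k) = 0, v_{a_2}(G_k) = 0, s_{a_2}(G_k) = 1; and v_{a_1}(G_3) = v_{a_2}(G_3) = t, s_{a_1}(G_3) = s_{a_2}(G_3) = 1. Then this instance admits an allocation that is simultaneously SIM, EF1 for agent a_1, and SA-EF1 for agent a_2 if and only if there exists J ⊆ [ℓ] with ∑_{j∈J} w_j = t. -/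
open Finset

variable {N M : Type*}

/-- The allocation `A` is EF1 for agent `i`. -/
def EF1for [Fintype M] [DecidableEq N] [DecidableEq M]
    (v : N → M → ℕ) (A : M → N) (i : N) : Prop :=
  ∀ j : N, ∃ g : M, val (v i) (bundle A i) ≥ val (v i) ((bundle A j).erase g)

/-- The allocation `A` is SA-EF1 for agent `i`. -/
def SAEF1for [Fintype M] [DecidableEq N] [DecidableEq M]
    (v s : N → M → ℕ) (A : M → N) (i : N) : Prop :=
  ∀ j : N,
    (∃ g : M, val (v i) (bundle A i) ≥ val (v i) ((bundle A j).erase g)) ∨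
    val (s i) (bundle A j) < val (s j) (bundle A j)

lemma val_bundle_eq [Fintype M] [DecidableEq N] (A : M → N) (i : N) (f : M → ℕ) :
    val f (bundle A i) = ∑ g, if A g = i then f g else 0 := by
  simp [_root_.val, bundle, Finset.sum_filter]

lemma impact_total [Fintype M] [Fintype N] [DecidableEq N] (A : M → N) (s : N → M → ℕ) :
    ∑ i : N, val (s i) (bundle A i) = ∑ g, s (A g) g := by
  simp only [val_bundle_eq]
  rw [Finset.sum_comm]
  exact Finset.sum_congr rfl fun g _ => by simp

lemma val_le_erase_add_s15 [DecidableEq M] (f : M → ℕ) (B : Finset M) (g : M) :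
    val f B ≤ val f (B.erase g) + f g := by
  by_cases h : g ∈ B
  · rw [_root_.val, _root_.val, Finset.sum_erase_add _ _ h]
  · rw [Finset.erase_eq_of_notMem h]; exact Nat.le_add_right _ _

lemma val_erase_le [DecidableEq M] (f : M → ℕ) (B : Finset M) (g : M) :
    val f (B.erase g) ≤ val f B :=
  Finset.sum_le_sum_of_subset (Finset.erase_subset _ _)

lemma expand3 {ℓ : ℕ} (f : (Fin ℓ ⊕ Fin 3) → ℕ) (A : (Fin ℓ ⊕ Fin 3) → Fin 2) (i : Fin 2) :
    val f (bundle A i) = (∑ j, if A (Sum.inl j) = i then f (Sum.inl j) else 0)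
      + ((if A (Sum.inr 0) = i then f (Sum.inr 0) else 0)
        + (if A (Sum.inr 1) = i then f (Sum.inr 1) else 0)
        + (if A (Sum.inr 2) = i then f (Sum.inr 2) else 0)) := by
  rw [val_bundle_eq, Fintype.sum_sum_type, Fin.sum_univ_three]

def vfun (ℓ t : ℕ) (w : Fin ℓ → ℕ) : Fin 2 → (Fin ℓ ⊕ Fin 3) → ℕ :=
  fun i => Sum.elim (fun j => w j) (fun k => if k = 2 then t else (if i = 0 then t else 0))
def sfun (ℓ : ℕ) : Fin 2 → (Fin ℓ ⊕ Fin 3) → ℕ :=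
  fun i => Sum.elim (fun _ => 1) (fun k => if k = 2 then 1 else (if i = 0 then 0 else 1))

section
variable {ℓ t : ℕ} {w : Fin ℓ → ℕ}

@[simp] lemma vfun_inl (i j) : vfun ℓ t w i (Sum.inl j) = w j := rfl
@[simp] lemma vfun_inr2 (i) : vfun ℓ t w i (Sum.inr 2) = t := by simp [vfun]
@[simp] lemma vfun_zero_inr0 : vfun ℓ t w 0 (Sum.inr 0) = t := by simp [vfun]
@[simp] lemma vfun_zero_inr1 : vfun ℓ t w 0 (Sum.inr 1) = t := by simp [vfun]
@[simp] lemma vfun_one_inr0 : vfun ℓ t w 1 (Sum.inr 0) = 0 := by simp [vfun]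
@[simp] lemma vfun_one_inr1 : vfun ℓ t w 1 (Sum.inr 1) = 0 := by simp [vfun]
@[simp] lemma sfun_inl (i j) : sfun ℓ i (Sum.inl j) = 1 := rfl
@[simp] lemma sfun_inr2 (i) : sfun ℓ i (Sum.inr 2) = 1 := by simp [sfun]
@[simp] lemma sfun_zero_inr0 : sfun ℓ 0 (Sum.inr 0) = 0 := by simp [sfun]
@[simp] lemma sfun_zero_inr1 : sfun ℓ 0 (Sum.inr 1) = 0 := by simp [sfun]
@[simp] lemma sfun_one_inr0 : sfun ℓ 1 (Sum.inr 0) = 1 := by simp [sfun]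
@[simp] lemma sfun_one_inr1 : sfun ℓ 1 (Sum.inr 1) = 1 := by simp [sfun]

lemma sfun_le_one (i : Fin 2) (g : Fin ℓ ⊕ Fin 3) : sfun ℓ i g ≤ 1 := by
  rcases g with j | k
  · simp
  · simp only [sfun, Sum.elim_inr]; split_ifs <;> omega

lemma vfun_le (hwt : ∀ j, w j < t) (i : Fin 2) (g : Fin ℓ ⊕ Fin 3) : vfun ℓ t w i g ≤ t := by
  rcases g with j | k
  · exact (hwt j).le
  · simp only [vfun, Sum.elim_inr]; split_ifs <;> omega
end


/-- Partition reduction with one socially unaware agent: two agents `0 = a₁`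
(socially unaware), `1 = a₂`; items `Sum.inl j = g_j` (value `w j`, impact `1` for
both) and `Sum.inr k = G_{k+1}` with
`v_{a₁}(G₁) = v_{a₁}(G₂) = t, s_{a₁}(G₁) = s_{a₁}(G₂) = 0`,
`v_{a₂}(G₁) = v_{a₂}(G₂) = 0, s_{a₂}(G₁) = s_{a₂}(G₂) = 1`,
`v_{a₁}(G₃) = v_{a₂}(G₃) = t, s_{a₁}(G₃) = s_{a₂}(G₃) = 1`.
A SIM allocation that is EF1 for `a₁` and SA-EF1 for `a₂` exists iff `w` can be
partitioned. -/
theorem sim_ef1_saef1_iff_partition (ℓ t : ℕ) (w : Fin ℓ → ℕ)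
    (hw : ∀ j, 0 < w j) (hsum : ∑ j, w j = 2 * t) (hwt : ∀ j, w j < t) :
    (∃ A : (Fin ℓ ⊕ Fin 3) → Fin 2,
        SIM (fun i : Fin 2 => Sum.elim (fun _ : Fin ℓ => 1)
          (fun k : Fin 3 => if k = 2 then 1 else (if i = 0 then 0 else 1))) A ∧
        EF1for (fun i : Fin 2 => Sum.elim (fun j : Fin ℓ => w j)
          (fun k : Fin 3 => if k = 2 then t else (if i = 0 then t else 0))) A 0 ∧
        SAEF1for (fun i : Fin 2 => Sum.elim (fun j : Fin ℓ => w j)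
          (fun k : Fin 3 => if k = 2 then t else (if i = 0 then t else 0)))
          (fun i : Fin 2 => Sum.elim (fun _ : Fin ℓ => 1)
          (fun k : Fin 3 => if k = 2 then 1 else (if i = 0 then 0 else 1))) A 1) ↔
    (∃ J : Finset (Fin ℓ), ∑ j ∈ J, w j = t) := by
  show (∃ A : (Fin ℓ ⊕ Fin 3) → Fin 2,
      SIM (sfun ℓ) A ∧ EF1for (vfun ℓ t w) A 0 ∧ SAEF1for (vfun ℓ t w) (sfun ℓ) A 1) ↔
    (∃ J : Finset (Fin ℓ), ∑ j ∈ J, w j = t)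
  have fin2 : ∀ a : Fin 2, a = 0 ∨ a = 1 := by decide
  have fin3 : ∀ k : Fin 3, k = 0 ∨ k = 1 ∨ k = 2 := by decide
  constructor
  · rintro ⟨A, hSIM, hEF1, hSA⟩
    by_cases ht : t = 0
    · exact ⟨∅, by simp [ht]⟩
    -- partition identity
    have hT : (∑ j, if A (Sum.inl j) = 0 then w j else 0)
        + (∑ j, if A (Sum.inl j) = 1 then w j else 0) = 2 * t := by
      rw [← Finset.sum_add_distrib, ← hsum]
      refine Finset.sum_congr rfl fun j _ => ?_
      rcases fin2 (A (Sum.inl j)) with h | h <;> simp [h]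
    -- SIM forces G1, G2 to agent 1
    have htot := hSIM (fun _ => 1)
    rw [impact_total, impact_total, Fintype.sum_sum_type, Fintype.sum_sum_type,
      Fin.sum_univ_three, Fin.sum_univ_three] at htot
    simp only [sfun_inl, sfun_inr2, sfun_one_inr0, sfun_one_inr1] at htot
    have hA0 : A (Sum.inr 0) = 1 := by
      rcases fin2 (A (Sum.inr 0)) with h | h
      · exfalso
        rcases fin2 (A (Sum.inr 1)) with h' | h' <;>
          simp only [h, h', sfun_zero_inr0, sfun_zero_inr1, sfun_one_inr1] at htot <;> omega
      · exact h
    have hA1 : A (Sum.inr 1) = 1 := by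
      rcases fin2 (A (Sum.inr 1)) with h | h
      · exfalso
        simp only [hA0, h, sfun_one_inr0, sfun_zero_inr1] at htot; omega
      · exact h
    -- bundle value computations
    have hB00 : val (vfun ℓ t w 0) (bundle A 0)
        = (∑ j, if A (Sum.inl j) = 0 then w j else 0) + (if A (Sum.inr 2) = 0 then t else 0) := by
      rw [expand3]; simp [hA0, hA1]
    have hB01 : val (vfun ℓ t w 0) (bundle A 1)
        = (∑ j, if A (Sum.inl j) = 1 then w j else 0)
          + (t + t + (if A (Sum.inr 2) = 1 then t else 0)) := by
      rw [expand3]; simp [hA0, hA1]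
    have hB10 : val (vfun ℓ t w 1) (bundle A 0)
        = (∑ j, if A (Sum.inl j) = 0 then w j else 0) + (if A (Sum.inr 2) = 0 then t else 0) := by
      rw [expand3]; simp [hA0, hA1]
    have hB11 : val (vfun ℓ t w 1) (bundle A 1)
        = (∑ j, if A (Sum.inl j) = 1 then w j else 0) + (if A (Sum.inr 2) = 1 then t else 0) := by
      rw [expand3]; simp [hA0, hA1]
    have hS0B0 : val (sfun ℓ 0) (bundle A 0)
        = (∑ j, if A (Sum.inl j) = 0 then (1:ℕ) else 0) + (if A (Sum.inr 2) = 0 then 1 else 0) := by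
      rw [expand3]; simp [hA0, hA1]
    have hS1B0 : val (sfun ℓ 1) (bundle A 0)
        = (∑ j, if A (Sum.inl j) = 0 then (1:ℕ) else 0) + (if A (Sum.inr 2) = 0 then 1 else 0) := by
      rw [expand3]; simp [hA0, hA1]
    -- the SA strict branch is impossible
    obtain ⟨g, hg⟩ := (hSA 0).resolve_right (by rw [hS1B0, hS0B0]; exact lt_irrefl _)
    obtain ⟨g1, hg1⟩ := hEF1 1
    have k1 : val (vfun ℓ t w 0) (bundle A 1) ≤ val (vfun ℓ t w 0) (bundle A 0) + t :=
      le_trans (val_le_erase_add_s15 _ _ g1)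
        (add_le_add (le_trans (le_of_eq rfl) hg1) (vfun_le hwt 0 g1))
    rcases fin2 (A (Sum.inr 2)) with h2 | h2
    · -- G3 to agent 0 : partition case
      have k2 : val (vfun ℓ t w 1) (bundle A 0) ≤ val (vfun ℓ t w 1) (bundle A 1) + t :=
        le_trans (val_le_erase_add_s15 _ _ g) (add_le_add hg (vfun_le hwt 1 g))
      rw [hB01, hB00] at k1
      rw [hB10, hB11] at k2
      simp only [h2, if_pos, if_neg] at k1 k2
      refine ⟨univ.filter (fun j => A (Sum.inl j) = 0), ?_⟩
      rw [Finset.sum_filter]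
      have h20 : ((0:Fin 2) = 1) = False := by simp
      simp only [h2, h20, if_true, if_false] at k1 k2
      omega
    · -- G3 to agent 1 : contradiction
      exfalso
      rw [hB01, hB00] at k1
      simp only [h2] at k1
      have h21 : ((1:Fin 2) = 0) = False := by simp
      simp only [h21, if_false, if_true] at k1
      -- k1 : T1 + (t + t + t) ≤ T0 + 0 + t  ⇒ T1 = 0, T0 = 2t
      have hT1 : (∑ j, if A (Sum.inl j) = 1 then w j else 0) = 0 := by omega
      have hT0 : (∑ j, if A (Sum.inl j) = 0 then w j else 0) = 2 * t := by omega
      have hv1B0 : val (vfun ℓ t w 1) (bundle A 0) = 2 * t := by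
        rw [hB10]; simp only [h2, h21, if_false]; omega
      have hv1B1 : val (vfun ℓ t w 1) (bundle A 1) = t := by
        rw [hB11]; simp only [h2, if_pos]; omega
      rw [hv1B1] at hg
      by_cases hgB : g ∈ bundle A 0
      · have hgA : A g = 0 := (Finset.mem_filter.mp hgB).2
        rcases g with j | k
        · have he : val (vfun ℓ t w 1) ((bundle A 0).erase (Sum.inl j)) + w j
              = val (vfun ℓ t w 1) (bundle A 0) := Finset.sum_erase_add _ _ hgB
          rw [hv1B0] at he
          have := hwt j
          omega
        · rcases fin3 k with h | h | h <;> rw [h] at hgA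
          · exact absurd (hA0.symm.trans hgA) (by decide)
          · exact absurd (hA1.symm.trans hgA) (by decide)
          · exact absurd (h2.symm.trans hgA) (by decide)
      · rw [Finset.erase_eq_of_notMem hgB, hv1B0] at hg
        omega
  · rintro ⟨J, hJ⟩
    classical
    set A : (Fin ℓ ⊕ Fin 3) → Fin 2 :=
      Sum.elim (fun j => if j ∈ J then 0 else 1) (fun k => if k = 2 then 0 else 1) with hAdef
    have hA0 : A (Sum.inr 0) = 1 := by simp [hAdef]
    have hA1 : A (Sum.inr 1) = 1 := by simp [hAdef]
    have hA2 : A (Sum.inr 2) = 0 := by simp [hAdef]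
    have hAl : ∀ j, A (Sum.inl j) = if j ∈ J then 0 else 1 := fun j => rfl
    have e0 : (∑ j, if A (Sum.inl j) = 0 then w j else 0) = t := by
      have : ∀ j : Fin ℓ, (if A (Sum.inl j) = 0 then w j else 0)
          = (if j ∈ J then w j else 0) := by
        intro j; by_cases h : j ∈ J <;> simp [hAl, h]
      rw [Finset.sum_congr rfl fun j _ => this j]
      rw [← Finset.sum_filter]
      rwa [Finset.filter_mem_eq_inter, Finset.univ_inter]
    have hT : (∑ j, if A (Sum.inl j) = 0 then w j else 0)
        + (∑ j, if A (Sum.inl j) = 1 then w j else 0) = 2 * t := by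
      rw [← Finset.sum_add_distrib, ← hsum]
      refine Finset.sum_congr rfl fun j _ => ?_
      rcases fin2 (A (Sum.inl j)) with h | h <;> simp [h]
    have e1 : (∑ j, if A (Sum.inl j) = 1 then w j else 0) = t := by omega
    -- bundle values
    have hB00 : val (vfun ℓ t w 0) (bundle A 0) = 2 * t := by
      rw [expand3]; simp [hA0, hA1, hA2, e0]; omega
    have hB01 : val (vfun ℓ t w 0) (bundle A 1) = 3 * t := by
      rw [expand3]; simp [hA0, hA1, hA2, e1]; omega
    have hB10 : val (vfun ℓ t w 1) (bundle A 0) = 2 * t := by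
      rw [expand3]; simp [hA0, hA1, hA2, e0]; omega
    have hB11 : val (vfun ℓ t w 1) (bundle A 1) = t := by
      rw [expand3]; simp [hA0, hA1, hA2, e1]
    refine ⟨A, ?_, ?_, ?_⟩
    · -- SIM
      intro A'
      rw [ge_iff_le, impact_total, impact_total]
      calc ∑ g, sfun ℓ (A' g) g ≤ ∑ _g : Fin ℓ ⊕ Fin 3, 1 :=
            Finset.sum_le_sum fun g _ => sfun_le_one (A' g) g
        _ = ℓ + 3 := by
            rw [Fintype.sum_sum_type]; simp
        _ = ∑ g, sfun ℓ (A g) g := by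
            rw [Fintype.sum_sum_type, Fin.sum_univ_three]
            simp [hA0, hA1, hA2]
    · -- EF1 for agent 0
      intro j
      rcases fin2 j with h | h <;> rw [h]
      · exact ⟨Sum.inr 0, val_erase_le _ _ _⟩
      · refine ⟨Sum.inr 0, ?_⟩
        have hm : Sum.inr 0 ∈ bundle A 1 := by
          simp [bundle, hA0]
        have he : val (vfun ℓ t w 0) ((bundle A 1).erase (Sum.inr 0)) + t
            = val (vfun ℓ t w 0) (bundle A 1) := by
          have := Finset.sum_erase_add (bundle A 1) (vfun ℓ t w 0) hm
          simpa [_root_.val] using this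
        rw [hB00]
        show val (vfun ℓ t w 0) ((bundle A 1).erase (Sum.inr 0)) ≤ 2 * t
        omega
    · -- SAEF1 for agent 1
      intro j
      rcases fin2 j with h | h <;> rw [h]
      · left
        refine ⟨Sum.inr 2, ?_⟩
        have hm : Sum.inr 2 ∈ bundle A 0 := by simp [bundle, hA2]
        have he : val (vfun ℓ t w 1) ((bundle A 0).erase (Sum.inr 2)) + t
            = val (vfun ℓ t w 1) (bundle A 0) := by
          have := Finset.sum_erase_add (bundle A 0) (vfun ℓ t w 1) hm
          simpa [_root_.val] using this
        rw [hB11]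
        show val (vfun ℓ t w 1) ((bundle A 0).erase (Sum.inr 2)) ≤ t
        omega
      · exact Or.inl ⟨Sum.inr 0, val_erase_le _ _ _⟩
end
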